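/- Fix α ∈ ℝ and let m(α) be the smallest eigenvalue of K(α) = L - αΔ with eigenspace σ(α). Then every unit vector ν ∈ σ(α) attains the differential uncertainty curve: for every unit vector η with ⟨η, Δ η⟩ = ⟨ν, Δ ν⟩, one has ⟨η, L η⟩ ≥ ⟨ν, L ν⟩. -/
import Mathlib


open Matrix BigOperators

/-- A simple (loopless, undirected) connected weighted graph on `N` vertices,
presented via its weight function. -/
structure GraphLaplacian (N : ℕ) where
  w : Fin N → Fin N → ℝ
  symm : ∀ i j, w i j = w j i
  nonneg : ∀ i j, 0 ≤ w i j
  loopless : ∀ i, w i i = 0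
  connected : ∀ i j : Fin N, Relation.ReflTransGen (fun a b => 0 < w a b) i j

/-- The graph Laplacian `L = D - A`. -/
def GraphLaplacian.L {N : ℕ} (G : GraphLaplacian N) : Matrix (Fin N) (Fin N) ℝ :=
  fun i j => if i = j then ∑ k, G.w i k else -G.w i j

/-- any unit vector in the minimal eigenspace `σ(α)` of `K(α) = L - αΔ`
attains the differential uncertainty curve. -/
theorem minimal_eigenvector_attains_DUC {N : ℕ} (G : GraphLaplacian N)
    (χ : Matrix (Fin N) (Fin N) ℝ) (lam : Fin N → ℝ)
    (hχ : χᵀ * χ = 1)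
    (hdiag : χᵀ * G.L * χ = Matrix.diagonal lam)
    (α m : ℝ)
    (hm : ∀ g : Fin N → ℝ, g ⬝ᵥ g = 1 →
      m ≤ g ⬝ᵥ ((G.L - α • Matrix.diagonal lam) *ᵥ g))
    (ν : Fin N → ℝ) (hν : ν ⬝ᵥ ν = 1)
    (heig : (G.L - α • Matrix.diagonal lam) *ᵥ ν = m • ν) :
    ∀ η : Fin N → ℝ, η ⬝ᵥ η = 1 →
      η ⬝ᵥ (Matrix.diagonal lam *ᵥ η) = ν ⬝ᵥ (Matrix.diagonal lam *ᵥ ν) →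
      ν ⬝ᵥ (G.L *ᵥ ν) ≤ η ⬝ᵥ (G.L *ᵥ η) := by
  intro η hη hx
  have key : ∀ g : Fin N → ℝ, g ⬝ᵥ ((G.L - α • Matrix.diagonal lam) *ᵥ g)
      = g ⬝ᵥ (G.L *ᵥ g) - α * (g ⬝ᵥ (Matrix.diagonal lam *ᵥ g)) := by
    intro g
    rw [Matrix.sub_mulVec, dotProduct_sub, Matrix.smul_mulVec, dotProduct_smul,
      smul_eq_mul]
  have hK : ν ⬝ᵥ ((G.L - α • Matrix.diagonal lam) *ᵥ ν) = m := by
    rw [heig, dotProduct_smul, smul_eq_mul, hν, mul_one]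
  have h2 := hm η hη
  rw [key] at h2 hK
  rw [hx] at h2
  linarith
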